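/- Let γ₁, γ₂ ∈ (-1, -1/2) with γ₁ + γ₂ > -3/2, let A ∈ ℝ, and define g(x,y) = (A/2)·(x₊^{γ₁} y₊^{γ₂} + x₊^{γ₂} y₊^{γ₁}). For s₁ < s₂, the integral ∫_{ℝ²} g(s₁-x₁, s₁-x₂) g(s₂-x₂, s₂-x₁) dx₁dx₂ equals (A/2)² (s₂-s₁)^{2(γ₁+γ₂)+2} · Σ_{σ ∈ {1,2}²} B(γ_{σ₁}+1, -γ_{σ₂'}-γ_{σ₁}-1) · B(γ_{σ₁'}+1, -γ_{σ₁'}-γ_{σ₂}-1), where for σ = (σ₁,σ₂) with σ_i ∈ {1,2} the complement is σ_i' = 3 - σ_i. -/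

import Mathlib

open MeasureTheory

/-- The Euler beta function `B(x,y) = Γ(x)Γ(y)/Γ(x+y)`. -/
noncomputable def eulerBeta (x y : ℝ) : ℝ := Real.Gamma x * Real.Gamma y / Real.Gamma (x + y)

/-- The generalized Rosenblatt kernel
`g(x,y) = (A/2) (x₊^{γ₁} y₊^{γ₂} + x₊^{γ₂} y₊^{γ₁})`. -/
noncomputable def genRosenblattKernel (A γ₁ γ₂ : ℝ) (x y : ℝ) : ℝ :=
  A / 2 * ((max x 0) ^ γ₁ * (max y 0) ^ γ₂ + (max x 0) ^ γ₂ * (max y 0) ^ γ₁)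

open Set

lemma beta_aux {a b : ℝ} (ha : 0 < a) (hb : 0 < b) :
    IntegrableOn (fun t : ℝ => t ^ (a-1) * (1-t) ^ (b-1)) (Ioo 0 1) ∧
    ∫ t in Ioo 0 1, t ^ (a-1) * (1-t) ^ (b-1) = eulerBeta a b := by
  set C : ℝ → ℂ := fun x => (x:ℂ) ^ ((a:ℂ)-1) * ((1:ℂ)-x) ^ ((b:ℂ)-1) with hC
  have hCint : IntervalIntegrable C volume 0 1 :=
    Complex.betaIntegral_convergent (by simpa using ha) (by simpa using hb)
  have heq : ∀ x ∈ Icc (0:ℝ) 1, C x = ((x ^ (a-1) * (1-x) ^ (b-1) : ℝ) : ℂ) := by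
    intro x hx
    have h1 : ((x ^ (a-1) : ℝ) : ℂ) = (x:ℂ) ^ ((a:ℂ)-1) := by
      rw [Complex.ofReal_cpow hx.1]; push_cast; ring_nf
    have h2 : (((1-x) ^ (b-1) : ℝ) : ℂ) = ((1:ℂ)-x) ^ ((b:ℂ)-1) := by
      rw [Complex.ofReal_cpow (by linarith [hx.2])]; push_cast; ring_nf
    rw [hC]; push_cast [← h1, ← h2]; ring
  have hint : IntegrableOn (fun t : ℝ => t ^ (a-1) * (1-t) ^ (b-1)) (Ioo 0 1) := by
    have h1 : IntegrableOn C (Ioc 0 1) :=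
      (intervalIntegrable_iff_integrableOn_Ioc_of_le zero_le_one).mp hCint
    have h2 : IntegrableOn (fun x => (C x).re) (Ioo 0 1) := (h1.mono_set Ioo_subset_Ioc_self).re
    refine h2.congr_fun (fun x hx => ?_) measurableSet_Ioo
    show (C x).re = _
    rw [heq x ⟨hx.1.le, hx.2.le⟩, Complex.ofReal_re]
  refine ⟨hint, ?_⟩
  have hval : Complex.betaIntegral a b = ((∫ t in (0:ℝ)..1, t ^ (a-1) * (1-t) ^ (b-1) : ℝ) : ℂ) := by
    rw [Complex.betaIntegral, ← intervalIntegral.integral_ofReal]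
    refine intervalIntegral.integral_congr (fun x hx => ?_)
    rw [uIcc_of_le zero_le_one] at hx
    exact heq x hx
  have hG := Complex.Gamma_mul_Gamma_eq_betaIntegral
    (s := (a:ℂ)) (t := (b:ℂ)) (by simpa using ha) (by simpa using hb)
  rw [hval] at hG
  have hG' : Real.Gamma a * Real.Gamma b
      = Real.Gamma (a+b) * ∫ t in (0:ℝ)..1, t ^ (a-1) * (1-t) ^ (b-1) := by
    have := hG
    rw [← Complex.ofReal_add, Complex.Gamma_ofReal, Complex.Gamma_ofReal,
      Complex.Gamma_ofReal, ← Complex.ofReal_mul, ← Complex.ofReal_mul] at this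
    exact_mod_cast this
  have hGne : Real.Gamma (a+b) ≠ 0 := (Real.Gamma_pos_of_pos (by linarith)).ne'
  have : ∫ t in (0:ℝ)..1, t ^ (a-1) * (1-t) ^ (b-1) = eulerBeta a b := by
    rw [eulerBeta]; field_simp [hGne] at hG' ⊢; linarith [hG']
  rw [← this, intervalIntegral.integral_of_le zero_le_one,
    MeasureTheory.integral_Ioc_eq_integral_Ioo]

lemma ioi_aux {α β : ℝ} (hα : -1 < α) (hαβ : α + β < -1) :
    IntegrableOn (fun y : ℝ => y ^ α * (1+y) ^ β) (Ioi 0) ∧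
    ∫ y in Ioi 0, y ^ α * (1+y) ^ β = eulerBeta (α+1) (-α-β-1) := by
  have ha : 0 < α + 1 := by linarith
  have hb : 0 < -α-β-1 := by linarith
  set f : ℝ → ℝ := fun t => t / (1-t) with hf
  set f' : ℝ → ℝ := fun t => 1 / (1-t)^2 with hf'
  have hderiv : ∀ t ∈ Ioo (0:ℝ) 1, HasDerivWithinAt f (f' t) (Ioo 0 1) t := by
    intro t ht
    have hne : (1:ℝ) - t ≠ 0 := by have := ht.2; intro h; nlinarith [ht.2]
    have := (hasDerivAt_id t).div ((hasDerivAt_id t).const_sub 1) hne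
    simp only [id] at this
    have h2 : (1*(1-t) - t*(-1))/(1-t)^2 = f' t := by rw [hf']; congr 1; ring
    rw [h2] at this
    exact this.hasDerivWithinAt
  have hinj : InjOn f (Ioo 0 1) := by
    intro t ht u hu h
    have h1 : (1:ℝ) - t ≠ 0 := by intro h'; nlinarith [ht.2]
    have h2 : (1:ℝ) - u ≠ 0 := by intro h'; nlinarith [hu.2]
    rw [hf] at h
    field_simp at h
    linarith
  have himg : f '' Ioo 0 1 = Ioi 0 := by
    ext y
    constructor
    · rintro ⟨t, ht, rfl⟩
      exact div_pos ht.1 (by linarith [ht.2])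
    · intro hy
      have hy' : (0:ℝ) < y := hy
      refine ⟨y / (1+y), ⟨div_pos hy' (by linarith), ?_⟩, ?_⟩
      · rw [div_lt_one (by linarith)]; linarith
      · show y / (1+y) / (1 - y/(1+y)) = y
        rw [show (1:ℝ) - y/(1+y) = 1/(1+y) from by field_simp; ring]
        field_simp
  set g : ℝ → ℝ := fun y => y ^ α * (1+y) ^ β with hg
  have hcong : ∀ t ∈ Ioo (0:ℝ) 1, |f' t| • g (f t) = t ^ (α+1-1) * (1-t) ^ (-α-β-1-1) := by
    intro t ht
    have h0 : (0:ℝ) < t := ht.1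
    have h1 : (0:ℝ) < 1 - t := by linarith [ht.2]
    have hft : (1:ℝ) + f t = 1/(1-t) := by rw [hf]; field_simp; ring
    rw [hg, hf']
    simp only [smul_eq_mul, hft]; simp only [hf]
    have hne2 : ∀ r : ℝ, ((1:ℝ)-t) ^ r ≠ 0 := fun r => (Real.rpow_pos_of_pos h1 r).ne'
    rw [abs_of_pos (by positivity), Real.div_rpow h0.le h1.le]
    simp only [one_div]
    rw [
      Real.inv_rpow h1.le,
      show α + 1 - 1 = α from by ring,
      show -α-β-1-1 = -(α + β + (2:ℝ)) from by ring,
      Real.rpow_neg h1.le, Real.rpow_add h1, Real.rpow_add h1,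
      show ((1:ℝ)-t)^(2:ℕ) = (1-t)^((2:ℝ)) from by
        rw [show (2:ℝ) = ((2:ℕ):ℝ) from by norm_num, Real.rpow_natCast]]
    field_simp
  obtain ⟨hbint, hbval⟩ := beta_aux ha hb
  constructor
  · rw [← himg,
      integrableOn_image_iff_integrableOn_abs_deriv_smul measurableSet_Ioo hderiv hinj]
    exact (hbint.congr_fun (fun t ht => (hcong t ht).symm) measurableSet_Ioo)
  · rw [← himg,
      integral_image_eq_integral_abs_deriv_smul measurableSet_Ioo hderiv hinj,
      setIntegral_congr_fun measurableSet_Ioo hcong, hbval]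

lemma one_dim {α β : ℝ} (hα : -1 < α) (hα0 : α < 0) (hβ0 : β < 0) (hαβ : α + β < -1)
    {s₁ s₂ : ℝ} (hs : s₁ < s₂) :
    Integrable (fun x : ℝ => (max (s₁ - x) 0) ^ α * (max (s₂ - x) 0) ^ β) ∧
    ∫ x : ℝ, (max (s₁ - x) 0) ^ α * (max (s₂ - x) 0) ^ β
      = (s₂ - s₁) ^ (α + β + 1) * eulerBeta (α+1) (-α-β-1) := by
  set c : ℝ := s₂ - s₁ with hc
  have hc0 : 0 < c := by simp [hc]; linarith
  set G : ℝ → ℝ := fun x => (max (s₁ - x) 0) ^ α * (max (s₂ - x) 0) ^ β with hG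
  set f : ℝ → ℝ := fun y => s₁ - c * y with hf
  have hderiv : ∀ y ∈ Ioi (0:ℝ), HasDerivWithinAt f (-c) (Ioi 0) y := by
    intro y hy
    exact (((hasDerivAt_id y).const_mul c).const_sub s₁).hasDerivWithinAt.congr_deriv
      (by simp)
  have hinj : InjOn f (Ioi 0) := fun a _ b _ h => by
    rw [hf] at h; simp only at h
    have : c * a = c * b := by linarith
    exact mul_left_cancel₀ hc0.ne' this
  have himg : f '' Ioi 0 = Iio s₁ := by
    ext x
    constructor
    · rintro ⟨y, hy, rfl⟩
      have hy' : (0:ℝ) < y := hy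
      show s₁ - c * y < s₁
      nlinarith
    · intro hx
      have hx' : x < s₁ := hx
      refine ⟨(s₁ - x)/c, ?_, ?_⟩
      · exact div_pos (by linarith) hc0
      · show s₁ - c * ((s₁ - x)/c) = x
        field_simp; ring
  have hcong : ∀ y ∈ Ioi (0:ℝ), |(-c)| • G (f y)
      = c ^ (α+β+1) * (y ^ α * (1+y) ^ β) := by
    intro y hy
    have hy' : (0:ℝ) < y := hy
    have e1 : s₁ - f y = c * y := by rw [hf]; ring
    have e2 : s₂ - f y = c * (1 + y) := by rw [hf]; simp only [hc]; ring
    rw [hG]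
    simp only [smul_eq_mul, e1, e2]
    rw [abs_neg, abs_of_pos hc0]
    rw [max_eq_left (by positivity), max_eq_left (by positivity),
      Real.mul_rpow hc0.le hy'.le, Real.mul_rpow hc0.le (by linarith),
      show α + β + 1 = α + (β + 1) from by ring, Real.rpow_add hc0, Real.rpow_add hc0,
      Real.rpow_one]
    ring
  obtain ⟨hiint, hival⟩ := ioi_aux hα hαβ
  have hIio : IntegrableOn G (Iio s₁) := by
    rw [← himg,
      integrableOn_image_iff_integrableOn_abs_deriv_smul measurableSet_Ioi hderiv hinj]
    exact IntegrableOn.congr_fun (hiint.const_mul (c ^ (α+β+1)))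
      (fun y hy => (hcong y hy).symm) measurableSet_Ioi
  have hzero : ∀ x, s₁ ≤ x → G x = 0 := by
    intro x hx
    rw [hG]
    simp only
    rw [max_eq_right (by linarith), Real.zero_rpow (by linarith), zero_mul]
  constructor
  · have hIci : IntegrableOn G (Ici s₁) := by
      refine (integrableOn_congr_fun (f := fun _ => (0:ℝ)) ?_ measurableSet_Ici).mp
        ((integrableOn_const_iff (C := (0:ℝ)) (by simp)).mpr (Or.inl (by norm_num)))
      intro x hx
      exact (hzero x hx).symm
    have := hIio.union hIci
    rwa [Iio_union_Ici, integrableOn_univ] at this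
  · rw [← setIntegral_eq_integral_of_forall_compl_eq_zero
      (s := Iio s₁) (fun x hx => hzero x (by simpa using hx)), ← himg,
      integral_image_eq_integral_abs_deriv_smul measurableSet_Ioi hderiv hinj,
      setIntegral_congr_fun measurableSet_Ioi hcong,
      integral_const_mul, hival]

/-- For `s₁ < s₂`, `∫_{ℝ²} g(s₁-x₁,s₁-x₂) g(s₂-x₂,s₂-x₁) dx₁ dx₂
  = (A/2)² (s₂-s₁)^{2(γ₁+γ₂)+2} Σ_{σ∈{1,2}²}
      B(γ_{σ₁}+1, -γ_{σ₂'}-γ_{σ₁}-1) B(γ_{σ₁'}+1, -γ_{σ₁'}-γ_{σ₂}-1)`,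
where the sum ranges over maps `σ : Fin 2 → Fin 2` (values indexing `γ = ![γ₁, γ₂]`)
and the complement `σ'` is given by `Fin.rev`. -/
theorem circular_integral_two
    (γ₁ γ₂ : ℝ) (h1 : γ₁ ∈ Set.Ioo (-1 : ℝ) (-1/2)) (h2 : γ₂ ∈ Set.Ioo (-1 : ℝ) (-1/2))
    (hsum : γ₁ + γ₂ > -3/2) (A : ℝ) (s₁ s₂ : ℝ) (hs : s₁ < s₂) :
    (∫ x : Fin 2 → ℝ,
        genRosenblattKernel A γ₁ γ₂ (s₁ - x 0) (s₁ - x 1) *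
          genRosenblattKernel A γ₁ γ₂ (s₂ - x 1) (s₂ - x 0))
      = (A / 2) ^ 2 * (s₂ - s₁) ^ (2 * (γ₁ + γ₂) + 2) *
          ∑ σ : Fin 2 → Fin 2,
            eulerBeta (![γ₁, γ₂] (σ 0) + 1)
                (-(![γ₁, γ₂] ((σ 1).rev)) - ![γ₁, γ₂] (σ 0) - 1) *
              eulerBeta (![γ₁, γ₂] ((σ 0).rev) + 1)
                (-(![γ₁, γ₂] ((σ 0).rev)) - ![γ₁, γ₂] (σ 1) - 1) := by
  obtain ⟨ha1, ha2⟩ := h1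
  obtain ⟨hb1, hb2⟩ := h2
  set c : ℝ := s₂ - s₁ with hc
  have hc0 : 0 < c := by rw [hc]; linarith
  set u : ℝ → ℝ → ℝ → ℝ :=
    fun p q x => (max (s₁ - x) 0) ^ p * (max (s₂ - x) 0) ^ q with hu
  have H12 : Integrable (u γ₁ γ₂) ∧ ∫ x, u γ₁ γ₂ x
      = c ^ (γ₁+γ₂+1) * eulerBeta (γ₁+1) (-γ₁-γ₂-1) :=
    one_dim ha1 (by linarith) (by linarith) (by linarith) hs
  have H21 : Integrable (u γ₂ γ₁) ∧ ∫ x, u γ₂ γ₁ x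
      = c ^ (γ₂+γ₁+1) * eulerBeta (γ₂+1) (-γ₂-γ₁-1) :=
    one_dim hb1 (by linarith) (by linarith) (by linarith) hs
  have H11 : Integrable (u γ₁ γ₁) ∧ ∫ x, u γ₁ γ₁ x
      = c ^ (γ₁+γ₁+1) * eulerBeta (γ₁+1) (-γ₁-γ₁-1) :=
    one_dim ha1 (by linarith) (by linarith) (by linarith) hs
  have H22 : Integrable (u γ₂ γ₂) ∧ ∫ x, u γ₂ γ₂ x
      = c ^ (γ₂+γ₂+1) * eulerBeta (γ₂+1) (-γ₂-γ₂-1) :=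
    one_dim hb1 (by linarith) (by linarith) (by linarith) hs
  -- step 1: reduce Fin 2 → ℝ integral to ℝ × ℝ
  have step1 : (∫ x : Fin 2 → ℝ,
        genRosenblattKernel A γ₁ γ₂ (s₁ - x 0) (s₁ - x 1) *
          genRosenblattKernel A γ₁ γ₂ (s₂ - x 1) (s₂ - x 0))
      = ∫ z : ℝ × ℝ, genRosenblattKernel A γ₁ γ₂ (s₁ - z.1) (s₁ - z.2) *
          genRosenblattKernel A γ₁ γ₂ (s₂ - z.2) (s₂ - z.1) := by
    rw [← (volume_preserving_finTwoArrow ℝ).integral_comp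
      (MeasurableEquiv.finTwoArrow).measurableEmbedding
      (fun z : ℝ × ℝ => genRosenblattKernel A γ₁ γ₂ (s₁ - z.1) (s₁ - z.2) *
          genRosenblattKernel A γ₁ γ₂ (s₂ - z.2) (s₂ - z.1))]
    rfl
  -- step 2: expand the product
  have step2 : ∀ z : ℝ × ℝ, genRosenblattKernel A γ₁ γ₂ (s₁ - z.1) (s₁ - z.2) *
          genRosenblattKernel A γ₁ γ₂ (s₂ - z.2) (s₂ - z.1)
      = (A/2)^2 * (u γ₁ γ₂ z.1 * u γ₂ γ₁ z.2) + (A/2)^2 * (u γ₁ γ₁ z.1 * u γ₂ γ₂ z.2)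
        + (A/2)^2 * (u γ₂ γ₂ z.1 * u γ₁ γ₁ z.2) + (A/2)^2 * (u γ₂ γ₁ z.1 * u γ₁ γ₂ z.2) := by
    intro z
    simp only [genRosenblattKernel, hu]
    ring
  simp only [step1, step2]
  rw [Measure.volume_eq_prod]
  have int1 := (H12.1.mul_prod H21.1).const_mul ((A/2)^2)
  have int2 := (H11.1.mul_prod H22.1).const_mul ((A/2)^2)
  have int3 := (H22.1.mul_prod H11.1).const_mul ((A/2)^2)
  have int4 := (H21.1.mul_prod H12.1).const_mul ((A/2)^2)
  have int12 : Integrable (fun z : ℝ × ℝ => (A/2)^2 * (u γ₁ γ₂ z.1 * u γ₂ γ₁ z.2)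
      + (A/2)^2 * (u γ₁ γ₁ z.1 * u γ₂ γ₂ z.2)) (volume.prod volume) := int1.add int2
  have int123 : Integrable (fun z : ℝ × ℝ => (A/2)^2 * (u γ₁ γ₂ z.1 * u γ₂ γ₁ z.2)
      + (A/2)^2 * (u γ₁ γ₁ z.1 * u γ₂ γ₂ z.2)
      + (A/2)^2 * (u γ₂ γ₂ z.1 * u γ₁ γ₁ z.2)) (volume.prod volume) := int12.add int3
  rw [integral_add int123 int4, integral_add int12 int3, integral_add int1 int2]
  rw [integral_const_mul, integral_const_mul, integral_const_mul, integral_const_mul,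
    integral_prod_mul, integral_prod_mul, integral_prod_mul, integral_prod_mul,
    H12.2, H21.2, H11.2, H22.2]
  -- evaluate the RHS sum
  rw [← Equiv.sum_comp (finTwoArrowEquiv (Fin 2)).symm]
  rw [Fintype.sum_prod_type]
  simp only [finTwoArrowEquiv_symm_apply, Fin.sum_univ_two,
    Matrix.cons_val_zero, Matrix.cons_val_one, Matrix.head_cons,
    show (0:Fin 2).rev = 1 from rfl, show (1:Fin 2).rev = 0 from rfl]
  have key : ∀ x y B₁ B₂ : ℝ, x + y = 2*(γ₁+γ₂)+2 →
      (c ^ x * B₁) * (c ^ y * B₂) = c ^ (2*(γ₁+γ₂)+2) * (B₁*B₂) := by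
    intro x y B₁ B₂ h
    rw [show c^x*B₁*(c^y*B₂) = c^x*c^y*(B₁*B₂) from by ring, ← Real.rpow_add hc0, h]
  rw [key _ _ _ _ (by ring), key _ _ _ _ (by ring), key _ _ _ _ (by ring),
    key _ _ _ _ (by ring)]
  ring_nf
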